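/- Let α and β be finite nonempty index types and let ψ : α × β → ℂ be a unit vector that is not a product vector, i.e. there exist no a : α → ℂ and b : β → ℂ with ψ(i,j) = a(i)·b(j) for all (i,j). Let Ψ denote the rank-one projector Ψ((i,j),(k,l)) = ψ(i,j)·conj(ψ(k,l)). Suppose ϱ : Bool × Bool → Matrix (α × β) (α × β) ℂ is a family of positive semidefinite matrices such that Ψ = ϱ(false,false) + (ϱ(false,true))^{T_B} + (ϱ(true,false))^{T_A} + (ϱ(true,true))ᵀ. Then ϱ(false,true) = 0 and ϱ(true,false) = 0, and there exists p ∈ [0,1] with ϱ(false,false) = p • Ψ and ϱ(true,true) = (1 − p) • Ψᵀ. -/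

import Mathlib

open Matrix BigOperators ComplexOrder

set_option linter.unusedSectionVars false
set_option maxHeartbeats 1000000

/-- Partial transpose on the second tensor factor. -/
def ptB {α β : Type*} (M : Matrix (α × β) (α × β) ℂ) : Matrix (α × β) (α × β) ℂ :=
  fun p q => M (p.1, q.2) (q.1, p.2)

/-- Partial transpose on the first tensor factor. -/
def ptA {α β : Type*} (M : Matrix (α × β) (α × β) ℂ) : Matrix (α × β) (α × β) ℂ :=
  fun p q => M (q.1, p.2) (p.1, q.2)

section Aux

variable {A B V : Type*} [AddCommGroup A] [Module ℂ A] [AddCommGroup B] [Module ℂ B]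
    [AddCommGroup V] [Module ℂ V]
    {F : A → B → V} {L : A → B → ℂ}

lemma aux_pair
    (hFa : ∀ a a' b, F (a + a') b = F a b + F a' b)
    (hFb : ∀ a b b', F a (b + b') = F a b + F a b')
    (hFsb : ∀ (c : ℂ) a b, F a (c • b) = c • F a b)
    (hLa : ∀ a a' b, L (a + a') b = L a b + L a' b)
    (hLb : ∀ a b b', L a (b + b') = L a b + L a b')
    (hLnb : ∀ a b, L a ((-1 : ℂ) • b) = - L a b)
    (H : ∀ a b, L a b = 0 → F a b = 0)
    (x y : A) (c₁ c₂ : B)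
    (e11 : L x c₁ = 1) (e12 : L x c₂ = 0) (e21 : L y c₁ = 0) (e22 : L y c₂ = 1) :
    F x c₁ = F y c₂ := by
  have hz : L (x + y) (c₁ + (-1 : ℂ) • c₂) = 0 := by
    simp only [hLa, hLb, hLnb, e11, e12, e21, e22]
    simp
  have h0 := H _ _ hz
  simp only [hFa, hFb, hFsb] at h0
  rw [H _ _ e12, H _ _ e21] at h0
  simpa [neg_smul, add_neg_eq_zero] using h0

/-- The "mixed" case: `L` is conjugate-linear in its second argument. Then `F` vanishes. -/
lemma aux_mixed
    (hFa : ∀ a a' b, F (a + a') b = F a b + F a' b)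
    (hFsa : ∀ (c : ℂ) a b, F (c • a) b = c • F a b)
    (hFb : ∀ a b b', F a (b + b') = F a b + F a b')
    (hFsb : ∀ (c : ℂ) a b, F a (c • b) = c • F a b)
    (hLa : ∀ a a' b, L (a + a') b = L a b + L a' b)
    (hLsa : ∀ (c : ℂ) a b, L (c • a) b = c * L a b)
    (hLb : ∀ a b b', L a (b + b') = L a b + L a b')
    (hLsb : ∀ (c : ℂ) a b, L a (c • b) = (starRingEnd ℂ) c * L a b)
    (H : ∀ a b, L a b = 0 → F a b = 0)
    (a₁ a₂ : A) (b₁ b₂ : B)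
    (h11 : L a₁ b₁ = 1) (h12 : L a₁ b₂ = 0) (h21 : L a₂ b₁ = 0) (h22 : L a₂ b₂ = 1) :
    ∀ a b, F a b = 0 := by
  have hLnb : ∀ a b, L a ((-1 : ℂ) • b) = - L a b := by
    intro a b; rw [hLsb]; simp
  have pair := aux_pair hFa hFb hFsb hLa hLb hLnb H
  have key0 : ∀ (x y : A) (c₁ c₂ : B), L x c₁ = 1 → L x c₂ = 0 → L y c₁ = 0 → L y c₂ = 1 →
      F x c₁ = 0 := by
    intro x y c₁ c₂ e11 e12 e21 e22
    have h1 : F x c₁ = F y c₂ := pair x y c₁ c₂ e11 e12 e21 e22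
    have e12' : L x (Complex.I • c₂) = 0 := by rw [hLsb, e12, mul_zero]
    have e21' : L (Complex.I • y) c₁ = 0 := by rw [hLsa, e21, mul_zero]
    have e22' : L (Complex.I • y) (Complex.I • c₂) = 1 := by
      rw [hLsb, hLsa, e22, mul_one, Complex.conj_I]
      simp [Complex.I_mul_I]
    have h2 : F x c₁ = F (Complex.I • y) (Complex.I • c₂) :=
      pair x (Complex.I • y) c₁ (Complex.I • c₂) e11 e12' e21' e22'
    rw [hFsa, hFsb, smul_smul, Complex.I_mul_I, ← h1] at h2
    have h4 : (2 : ℂ) • F x c₁ = 0 := by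
      rw [two_smul]; nth_rewrite 2 [h2]; simp
    have := congrArg (fun z => ((2 : ℂ)⁻¹) • z) h4
    simpa [smul_smul] using this
  have key : ∀ (x y : A) (c₁ c₂ : B), L x c₁ = 1 → L x c₂ = 0 → L y c₁ = 0 → L y c₂ = 1 →
      ∀ b, F x b = 0 := by
    intro x y c₁ c₂ e11 e12 e21 e22 b
    have hx1 : F x c₁ = 0 := key0 x y c₁ c₂ e11 e12 e21 e22
    have hzb : L x (b + (-(starRingEnd ℂ) (L x b)) • c₁) = 0 := by
      rw [hLb, hLsb, e11, mul_one, map_neg, Complex.conj_conj]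
      ring
    have h0 := H _ _ hzb
    rw [hFb, hFsb, hx1, smul_zero, add_zero] at h0
    exact h0
  intro a b
  have key1 : ∀ b, F a₁ b = 0 := key a₁ a₂ b₁ b₂ h11 h12 h21 h22
  have key2 : ∀ b, F a₂ b = 0 := key a₂ a₁ b₂ b₁ h22 h21 h12 h11
  set a' : A := a + (-(L a b₁)) • a₁ + (-(L a b₂)) • a₂ with ha'
  have ha'1 : L a' b₁ = 0 := by
    rw [ha']; simp only [hLa, hLsa, h11, h21]; ring
  have ha'2 : L a' b₂ = 0 := by
    rw [ha']; simp only [hLa, hLsa, h12, h22]; ring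
  have hx1 : L (a₁ + a') b₁ = 1 := by rw [hLa, h11, ha'1, add_zero]
  have hx2 : L (a₁ + a') b₂ = 0 := by rw [hLa, h12, ha'2, add_zero]
  have key3 : ∀ b, F (a₁ + a') b = 0 := key (a₁ + a') a₂ b₁ b₂ hx1 hx2 h21 h22
  have hFa' : F a' b = 0 := by
    have h5 := key3 b; rw [hFa, key1 b, zero_add] at h5; exact h5
  have hrw : a = a' + (L a b₁) • a₁ + (L a b₂) • a₂ := by rw [ha']; module
  calc F a b = F (a' + (L a b₁) • a₁ + (L a b₂) • a₂) b := by rw [← hrw]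
    _ = F a' b + (L a b₁) • F a₁ b + (L a b₂) • F a₂ b := by rw [hFa, hFa, hFsa, hFsa]
    _ = 0 := by rw [hFa', key1 b, key2 b]; simp

/-- The "aligned" case: `L` is bilinear. Then `F a b = L a b • w` for a fixed `w`. -/
lemma aux_aligned
    (hFa : ∀ a a' b, F (a + a') b = F a b + F a' b)
    (hFsa : ∀ (c : ℂ) a b, F (c • a) b = c • F a b)
    (hFb : ∀ a b b', F a (b + b') = F a b + F a b')
    (hFsb : ∀ (c : ℂ) a b, F a (c • b) = c • F a b)
    (hLa : ∀ a a' b, L (a + a') b = L a b + L a' b)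
    (hLsa : ∀ (c : ℂ) a b, L (c • a) b = c * L a b)
    (hLb : ∀ a b b', L a (b + b') = L a b + L a b')
    (hLsb : ∀ (c : ℂ) a b, L a (c • b) = c * L a b)
    (H : ∀ a b, L a b = 0 → F a b = 0)
    (a₁ a₂ : A) (b₁ b₂ : B)
    (h11 : L a₁ b₁ = 1) (h12 : L a₁ b₂ = 0) (h21 : L a₂ b₁ = 0) (h22 : L a₂ b₂ = 1) :
    ∀ a b, F a b = L a b • F a₁ b₁ := by
  have hLnb : ∀ a b, L a ((-1 : ℂ) • b) = - L a b := by
    intro a b; rw [hLsb]; ring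
  have pair := aux_pair hFa hFb hFsb hLa hLb hLnb H
  have key : ∀ (x : A) (c₁ : B), L x c₁ = 1 → ∀ b, F x b = L x b • F x c₁ := by
    intro x c₁ e11 b
    have hzb : L x (b + (-(L x b)) • c₁) = 0 := by
      rw [hLb, hLsb, e11]; ring
    have h0 := H _ _ hzb
    rw [hFb, hFsb] at h0
    simpa [neg_smul, add_neg_eq_zero] using h0
  intro a b
  have w22 : F a₂ b₂ = F a₁ b₁ := (pair a₁ a₂ b₁ b₂ h11 h12 h21 h22).symm
  have key1 : ∀ b, F a₁ b = L a₁ b • F a₁ b₁ := key a₁ b₁ h11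
  have key2 : ∀ b, F a₂ b = L a₂ b • F a₁ b₁ := by
    intro b; rw [key a₂ b₂ h22 b, w22]
  set a' : A := a + (-(L a b₁)) • a₁ + (-(L a b₂)) • a₂ with ha'
  have ha'1 : L a' b₁ = 0 := by
    rw [ha']; simp only [hLa, hLsa, h11, h21]; ring
  have ha'2 : L a' b₂ = 0 := by
    rw [ha']; simp only [hLa, hLsa, h12, h22]; ring
  have hx1 : L (a₁ + a') b₁ = 1 := by rw [hLa, h11, ha'1, add_zero]
  have hx2 : L (a₁ + a') b₂ = 0 := by rw [hLa, h12, ha'2, add_zero]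
  have w3 : F (a₁ + a') b₁ = F a₁ b₁ := by
    rw [pair (a₁ + a') a₂ b₁ b₂ hx1 hx2 h21 h22, w22]
  have key3 : ∀ b, F (a₁ + a') b = L (a₁ + a') b • F a₁ b₁ := by
    intro b; rw [key (a₁ + a') b₁ hx1 b, w3]
  have hFa' : F a' b = L a' b • F a₁ b₁ := by
    have h5 := key3 b
    rw [hFa, key1 b, hLa, add_smul] at h5
    exact add_left_cancel h5
  have hrw : a = a' + (L a b₁) • a₁ + (L a b₂) • a₂ := by rw [ha']; module
  have hL : L a b = L a' b + (L a b₁) * L a₁ b + (L a b₂) * L a₂ b := by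
    nth_rewrite 1 [hrw]
    simp only [hLa, hLsa]
  calc F a b = F (a' + (L a b₁) • a₁ + (L a b₂) • a₂) b := by rw [← hrw]
    _ = F a' b + (L a b₁) • F a₁ b + (L a b₂) • F a₂ b := by rw [hFa, hFa, hFsa, hFsa]
    _ = L a b • F a₁ b₁ := by
        rw [hFa', key1 b, key2 b, hL]
        simp [add_smul, smul_smul]

end Aux

section Helpers

variable {α β : Type*} [Fintype α] [Fintype β]

/-- elementary (product) vector -/
noncomputable def vv (a : α → ℂ) (b : β → ℂ) : α × β → ℂ := fun p => a p.1 * b p.2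

/-- pairing determined by coefficients `c` -/
noncomputable def SS (c : α × β → ℂ) (a : α → ℂ) (b : β → ℂ) : ℂ := ∑ p, c p * (a p.1 * b p.2)

lemma vv_addl (a a' : α → ℂ) (b : β → ℂ) : vv (a + a') b = vv a b + vv a' b := by
  funext p; simp [vv, add_mul]

lemma vv_addr (a : α → ℂ) (b b' : β → ℂ) : vv a (b + b') = vv a b + vv a b' := by
  funext p; simp [vv, mul_add]

lemma vv_smull (c : ℂ) (a : α → ℂ) (b : β → ℂ) : vv (c • a) b = c • vv a b := by
  funext p; simp [vv]; ring

lemma vv_smulr (c : ℂ) (a : α → ℂ) (b : β → ℂ) : vv a (c • b) = c • vv a b := by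
  funext p; simp [vv]; ring

lemma star_vv (a : α → ℂ) (b : β → ℂ) : star (vv a b) = vv (star a) (star b) := by
  funext p; simp [vv]

lemma vv_single [DecidableEq α] [DecidableEq β] (k : α) (l : β) :
    vv (Pi.single k 1) (Pi.single l 1) = Pi.single (k, l) (1 : ℂ) := by
  funext p
  obtain ⟨i, j⟩ := p
  simp only [vv, Pi.single_apply, Prod.mk.injEq]
  split_ifs with h1 h2 h3 h3 <;> simp_all

lemma SS_addl (c : α × β → ℂ) (a a' : α → ℂ) (b : β → ℂ) :
    SS c (a + a') b = SS c a b + SS c a' b := by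
  simp only [SS, ← Finset.sum_add_distrib]
  refine Finset.sum_congr rfl fun p _ => by simp [add_mul, mul_add]

lemma SS_addr (c : α × β → ℂ) (a : α → ℂ) (b b' : β → ℂ) :
    SS c a (b + b') = SS c a b + SS c a b' := by
  simp only [SS, ← Finset.sum_add_distrib]
  refine Finset.sum_congr rfl fun p _ => by simp [add_mul, mul_add]

lemma SS_smull (c : α × β → ℂ) (x : ℂ) (a : α → ℂ) (b : β → ℂ) :
    SS c (x • a) b = x * SS c a b := by
  simp only [SS, Finset.mul_sum]
  refine Finset.sum_congr rfl fun p _ => by simp; ring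

lemma SS_smulr (c : α × β → ℂ) (x : ℂ) (a : α → ℂ) (b : β → ℂ) :
    SS c a (x • b) = x * SS c a b := by
  simp only [SS, Finset.mul_sum]
  refine Finset.sum_congr rfl fun p _ => by simp; ring

lemma SS_single [DecidableEq α] [DecidableEq β] (c : α × β → ℂ) (i : α) (j : β) :
    SS c (Pi.single i 1) (Pi.single j 1) = c (i, j) := by
  unfold SS
  rw [Fintype.sum_eq_single (i, j)]
  · simp
  · intro p hp
    obtain ⟨x, y⟩ := p
    simp only [Pi.single_apply]
    split_ifs with h1 h2 <;> simp_all

lemma SS_conj (c : α × β → ℂ) (a : α → ℂ) (b : β → ℂ) :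
    (starRingEnd ℂ) (SS c a b) = SS (star c) (star a) (star b) := by
  simp [SS, map_sum]

/-- dual pairs of vectors associated to a nonvanishing 2×2 minor -/
lemma SS_dual [DecidableEq α] [DecidableEq β] (w : α × β → ℂ) (i0 k0 : α) (j0 l0 : β) {E : ℂ}
    (hEne : E ≠ 0) (hE : E = w (i0, j0) * w (k0, l0) - w (i0, l0) * w (k0, j0)) :
    SS w (Pi.single i0 1) ((w (k0, l0) / E) • (Pi.single j0 1 : β → ℂ) + (-(w (k0, j0)) / E) • (Pi.single l0 1 : β → ℂ)) = 1 ∧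
    SS w (Pi.single i0 1) ((-(w (i0, l0)) / E) • (Pi.single j0 1 : β → ℂ) + (w (i0, j0) / E) • (Pi.single l0 1 : β → ℂ)) = 0 ∧
    SS w (Pi.single k0 1) ((w (k0, l0) / E) • (Pi.single j0 1 : β → ℂ) + (-(w (k0, j0)) / E) • (Pi.single l0 1 : β → ℂ)) = 0 ∧
    SS w (Pi.single k0 1) ((-(w (i0, l0)) / E) • (Pi.single j0 1 : β → ℂ) + (w (i0, j0) / E) • (Pi.single l0 1 : β → ℂ)) = 1 := by
  refine ⟨?_, ?_, ?_, ?_⟩ <;>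
      rw [SS_addr, SS_smulr, SS_smulr, SS_single, SS_single]
  · field_simp
    linear_combination (-2 : ℂ) * hE + hE
  · field_simp
    linear_combination (-1 : ℂ) * hE + hE
  · field_simp
    linear_combination (-1 : ℂ) * hE + hE
  · field_simp
    linear_combination (-1 : ℂ) * hE

/-- quadratic form expansion -/
lemma Q_expand (M : Matrix (α × β) (α × β) ℂ) (u : α × β → ℂ) :
    star u ⬝ᵥ M *ᵥ u = ∑ x : (α × β) × (α × β), (starRingEnd ℂ) (u x.1) * (M x.1 x.2 * u x.2) := by
  rw [Fintype.sum_prod_type]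
  simp only [dotProduct, mulVec, Pi.star_apply, starRingEnd_apply]
  exact Finset.sum_congr rfl fun p _ => Finset.mul_sum _ _ _

lemma Q_ptB (M : Matrix (α × β) (α × β) ℂ) (a : α → ℂ) (b : β → ℂ) :
    star (vv a b) ⬝ᵥ ptB M *ᵥ (vv a b)
      = star (vv a (star b)) ⬝ᵥ M *ᵥ (vv a (star b)) := by
  rw [Q_expand, Q_expand]
  refine Fintype.sum_equiv (Function.Involutive.toPerm
    (fun x : (α × β) × (α × β) => ((x.1.1, x.2.2), (x.2.1, x.1.2))) (fun x => rfl)) _ _ ?_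
  rintro ⟨⟨i, j⟩, ⟨k, l⟩⟩
  simp only [Function.Involutive.toPerm, Equiv.coe_fn_mk, vv, ptB, Pi.star_apply, _root_.map_mul,
    Complex.conj_conj, RCLike.star_def]
  ring

lemma Q_ptA (M : Matrix (α × β) (α × β) ℂ) (a : α → ℂ) (b : β → ℂ) :
    star (vv a b) ⬝ᵥ ptA M *ᵥ (vv a b)
      = star (vv (star a) b) ⬝ᵥ M *ᵥ (vv (star a) b) := by
  rw [Q_expand, Q_expand]
  refine Fintype.sum_equiv (Function.Involutive.toPerm
    (fun x : (α × β) × (α × β) => ((x.2.1, x.1.2), (x.1.1, x.2.2))) (fun x => rfl)) _ _ ?_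
  rintro ⟨⟨i, j⟩, ⟨k, l⟩⟩
  simp only [Function.Involutive.toPerm, Equiv.coe_fn_mk, vv, ptA, Pi.star_apply, _root_.map_mul,
    Complex.conj_conj, RCLike.star_def]
  ring

lemma Q_transpose (M : Matrix (α × β) (α × β) ℂ) (u : α × β → ℂ) :
    star u ⬝ᵥ Mᵀ *ᵥ u = star (star u) ⬝ᵥ M *ᵥ (star u) := by
  rw [Q_expand, Q_expand]
  refine Fintype.sum_equiv (Equiv.prodComm _ _) _ _ ?_
  rintro ⟨p, q⟩
  simp only [Equiv.prodComm_apply, Prod.swap_prod_mk, transpose_apply, Pi.star_apply,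
    Complex.conj_conj, RCLike.star_def]
  ring

lemma four_nonneg_zero {x y z w : ℂ} (hx : 0 ≤ x) (hy : 0 ≤ y) (hz : 0 ≤ z) (hw : 0 ≤ w)
    (h : x + y + z + w = 0) : x = 0 ∧ y = 0 ∧ z = 0 ∧ w = 0 := by
  have key : ∀ u v : ℂ, 0 ≤ u → 0 ≤ v → u + v = 0 → u = 0 ∧ v = 0 := by
    intro u v hu hv huv
    have h1 : u = -v := eq_neg_of_add_eq_zero_left huv
    have h2 : u ≤ 0 := h1 ▸ neg_nonpos.2 hv
    have h3 : u = 0 := le_antisymm h2 hu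
    exact ⟨h3, by rw [h3, zero_add] at huv; exact huv⟩
  obtain ⟨hxyz, hw0⟩ := key _ _ (add_nonneg (add_nonneg hx hy) hz) hw h
  obtain ⟨hxy, hz0⟩ := key _ _ (add_nonneg hx hy) hz hxyz
  obtain ⟨hx0, hy0⟩ := key _ _ hx hy hxy
  exact ⟨hx0, hy0, hz0, hw0⟩

end Helpers

theorem stmt19 {α β : Type*} [Fintype α] [Fintype β] [Nonempty α] [Nonempty β]
    (ψ : α × β → ℂ) (hψnorm : ∑ p, Complex.normSq (ψ p) = 1)
    (hnp : ¬ ∃ (a : α → ℂ) (b : β → ℂ), ∀ i j, ψ (i, j) = a i * b j)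
    (Ψ : Matrix (α × β) (α × β) ℂ)
    (hΨ : ∀ p q, Ψ p q = ψ p * (starRingEnd ℂ) (ψ q))
    (ϱ : Bool × Bool → Matrix (α × β) (α × β) ℂ)
    (hpsd : ∀ kj, (ϱ kj).PosSemidef)
    (hsum : Ψ = ϱ (false, false) + ptB (ϱ (false, true)) + ptA (ϱ (true, false))
                  + (ϱ (true, true))ᵀ) :
    ϱ (false, true) = 0 ∧ ϱ (true, false) = 0 ∧
    ∃ p : ℝ, 0 ≤ p ∧ p ≤ 1 ∧
      ϱ (false, false) = ((p : ℝ) : ℂ) • Ψ ∧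
      ϱ (true, true) = (((1 - p : ℝ)) : ℂ) • Ψᵀ := by
  classical
  -- a point where ψ is nonzero
  have hψ0 : ∃ q, ψ q ≠ 0 := by
    by_contra h
    push_neg at h
    rw [Finset.sum_eq_zero (fun p _ => by rw [h p, Complex.normSq_zero])] at hψnorm
    exact one_ne_zero hψnorm.symm
  obtain ⟨qs, hqs⟩ := hψ0
  obtain ⟨q1, q2⟩ := qs
  -- a nonvanishing 2×2 minor
  have hminor : ∃ i0 k0 j0 l0, ψ (i0, j0) * ψ (k0, l0) - ψ (i0, l0) * ψ (k0, j0) ≠ 0 := by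
    by_contra h
    push_neg at h
    apply hnp
    refine ⟨fun i => ψ (i, q2) / ψ (q1, q2), fun j => ψ (q1, j), fun i j => ?_⟩
    have h0 := h i q1 j q2
    field_simp
    linear_combination h0
  obtain ⟨i0, k0, j0, l0, hD⟩ := hminor
  set D : ℂ := ψ (i0, j0) * ψ (k0, l0) - ψ (i0, l0) * ψ (k0, j0) with hDdef
  -- kernel facts from positivity
  have hker : ∀ (a : α → ℂ) (b : β → ℂ), SS (star ψ) a b = 0 →
      ϱ (false, false) *ᵥ vv a b = 0 ∧ ϱ (false, true) *ᵥ vv a (star b) = 0 ∧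
      ϱ (true, false) *ᵥ vv (star a) b = 0 ∧ ϱ (true, true) *ᵥ vv (star a) (star b) = 0 := by
    intro a b hab
    have hΨv : Ψ *ᵥ vv a b = 0 := by
      funext p
      have h1 : (Ψ *ᵥ vv a b) p = ψ p * SS (star ψ) a b := by
        simp only [mulVec, dotProduct, SS, Finset.mul_sum, hΨ]
        exact Finset.sum_congr rfl fun q _ => by simp only [vv, Pi.star_apply, RCLike.star_def]; ring
      rw [h1, hab, mul_zero]; rfl
    have hQ0 : star (vv a b) ⬝ᵥ Ψ *ᵥ (vv a b) = 0 := by rw [hΨv, dotProduct_zero]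
    rw [hsum, add_mulVec, add_mulVec, add_mulVec, dotProduct_add, dotProduct_add,
      dotProduct_add, Q_ptB, Q_ptA, Q_transpose] at hQ0
    have h00 := (hpsd (false, false)).dotProduct_mulVec_nonneg (vv a b)
    have h01 := (hpsd (false, true)).dotProduct_mulVec_nonneg (vv a (star b))
    have h10 := (hpsd (true, false)).dotProduct_mulVec_nonneg (vv (star a) b)
    have h11 := (hpsd (true, true)).dotProduct_mulVec_nonneg (vv (star a) (star b))
    simp only [star_vv, star_star] at hQ0 h00 h01 h10 h11
    obtain ⟨z00, z01, z10, z11⟩ := four_nonneg_zero h00 h01 h10 h11 hQ0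
    have i00 := (hpsd (false, false)).dotProduct_mulVec_zero_iff (vv a b)
    have i01 := (hpsd (false, true)).dotProduct_mulVec_zero_iff (vv a (star b))
    have i10 := (hpsd (true, false)).dotProduct_mulVec_zero_iff (vv (star a) b)
    have i11 := (hpsd (true, true)).dotProduct_mulVec_zero_iff (vv (star a) (star b))
    simp only [star_vv, star_star] at i00 i01 i10 i11
    exact ⟨i00.mp z00, i01.mp z01, i10.mp z10, i11.mp z11⟩
  -- dual systems
  have hDc : (starRingEnd ℂ) D ≠ 0 := by
    intro h
    apply hD
    have h2 := congrArg (starRingEnd ℂ) h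
    simpa using h2
  have hEconj : (starRingEnd ℂ) D
      = star ψ (i0, j0) * star ψ (k0, l0) - star ψ (i0, l0) * star ψ (k0, j0) := by
    rw [hDdef, map_sub, _root_.map_mul, _root_.map_mul]
    simp only [Pi.star_apply, starRingEnd_apply]
  have hEid : D = ψ (i0, j0) * ψ (k0, l0) - ψ (i0, l0) * ψ (k0, j0) := hDdef
  set SB1 : β → ℂ := (star ψ (k0, l0) / (starRingEnd ℂ) D) • (Pi.single j0 1 : β → ℂ)
      + (-(star ψ (k0, j0)) / (starRingEnd ℂ) D) • (Pi.single l0 1 : β → ℂ) with hSB1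
  set SB2 : β → ℂ := (-(star ψ (i0, l0)) / (starRingEnd ℂ) D) • (Pi.single j0 1 : β → ℂ)
      + (star ψ (i0, j0) / (starRingEnd ℂ) D) • (Pi.single l0 1 : β → ℂ) with hSB2
  set TB1 : β → ℂ := (ψ (k0, l0) / D) • (Pi.single j0 1 : β → ℂ)
      + (-(ψ (k0, j0)) / D) • (Pi.single l0 1 : β → ℂ) with hTB1
  set TB2 : β → ℂ := (-(ψ (i0, l0)) / D) • (Pi.single j0 1 : β → ℂ)
      + (ψ (i0, j0) / D) • (Pi.single l0 1 : β → ℂ) with hTB2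
  have dss := SS_dual (star ψ) i0 k0 j0 l0 hDc hEconj
  have dts := SS_dual ψ i0 k0 j0 l0 hD hEid
  have ds11 : SS (star ψ) (Pi.single i0 1) SB1 = 1 := dss.1
  have ds12 : SS (star ψ) (Pi.single i0 1) SB2 = 0 := dss.2.1
  have ds21 : SS (star ψ) (Pi.single k0 1) SB1 = 0 := dss.2.2.1
  have ds22 : SS (star ψ) (Pi.single k0 1) SB2 = 1 := dss.2.2.2
  have dt11 : SS ψ (Pi.single i0 1) TB1 = 1 := dts.1
  have dt12 : SS ψ (Pi.single i0 1) TB2 = 0 := dts.2.1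
  have dt21 : SS ψ (Pi.single k0 1) TB1 = 0 := dts.2.2.1
  have dt22 : SS ψ (Pi.single k0 1) TB2 = 1 := dts.2.2.2
  have hsa : ∀ i : α, star (Pi.single i 1 : α → ℂ) = Pi.single i 1 := by
    intro i; funext x; simp [Pi.single_apply, apply_ite (star : ℂ → ℂ)]
  -- the two "mixed" components vanish
  have hmix01 : ∀ (a : α → ℂ) (b : β → ℂ), ϱ (false, true) *ᵥ vv a b = 0 := by
    refine aux_mixed (F := fun a b => ϱ (false, true) *ᵥ vv a b)
      (L := fun a b => SS (star ψ) a (star b))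
      (fun a a' b => by simp only [vv_addl, mulVec_add])
      (fun c a b => by simp only [vv_smull, mulVec_smul])
      (fun a b b' => by simp only [vv_addr, mulVec_add])
      (fun c a b => by simp only [vv_smulr, mulVec_smul])
      (fun a a' b => by simp only [SS_addl])
      (fun c a b => by simp only [SS_smull])
      (fun a b b' => by simp only [star_add, SS_addr])
      (fun c a b => by simp only [star_smul, SS_smulr, starRingEnd_apply])
      (fun a b h => ?_)
      (Pi.single i0 1) (Pi.single k0 1) (star SB1) (star SB2)
      (by simp only [star_star]; exact ds11) (by simp only [star_star]; exact ds12)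
      (by simp only [star_star]; exact ds21) (by simp only [star_star]; exact ds22)
    have h2 := (hker a (star b) h).2.1
    rwa [star_star] at h2
  have hmix10 : ∀ (b : β → ℂ) (a : α → ℂ), ϱ (true, false) *ᵥ vv a b = 0 := by
    refine aux_mixed (F := fun (b : β → ℂ) (a : α → ℂ) => ϱ (true, false) *ᵥ vv a b)
      (L := fun (b : β → ℂ) (a : α → ℂ) => SS (star ψ) (star a) b)
      (fun b b' a => by simp only [vv_addr, mulVec_add])
      (fun c b a => by simp only [vv_smulr, mulVec_smul])
      (fun b a a' => by simp only [vv_addl, mulVec_add])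
      (fun c b a => by simp only [vv_smull, mulVec_smul])
      (fun b b' a => by simp only [SS_addr])
      (fun c b a => by simp only [SS_smulr])
      (fun b a a' => by simp only [star_add, SS_addl])
      (fun c b a => by simp only [star_smul, SS_smull, starRingEnd_apply])
      (fun b a h => ?_)
      SB1 SB2 (Pi.single i0 1) (Pi.single k0 1)
      (by simp only [hsa]; exact ds11) (by simp only [hsa]; exact ds21)
      (by simp only [hsa]; exact ds12) (by simp only [hsa]; exact ds22)
    have h2 := (hker (star a) b h).2.2.1
    rwa [star_star] at h2
  -- the two "aligned" components are rank one
  set w0 : α × β → ℂ := ϱ (false, false) *ᵥ vv (Pi.single i0 1) SB1 with hw0def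
  have hal00 : ∀ a b, ϱ (false, false) *ᵥ vv a b = SS (star ψ) a b • w0 := by
    refine aux_aligned (F := fun a b => ϱ (false, false) *ᵥ vv a b)
      (L := fun a b => SS (star ψ) a b)
      (fun a a' b => by simp only [vv_addl, mulVec_add])
      (fun c a b => by simp only [vv_smull, mulVec_smul])
      (fun a b b' => by simp only [vv_addr, mulVec_add])
      (fun c a b => by simp only [vv_smulr, mulVec_smul])
      (fun a a' b => by simp only [SS_addl])
      (fun c a b => by simp only [SS_smull])
      (fun a b b' => by simp only [SS_addr])
      (fun c a b => by simp only [SS_smulr])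
      (fun a b h => (hker a b h).1)
      (Pi.single i0 1) (Pi.single k0 1) SB1 SB2 ds11 ds12 ds21 ds22
  set w1 : α × β → ℂ := ϱ (true, true) *ᵥ vv (Pi.single i0 1) TB1 with hw1def
  have hal11 : ∀ a b, ϱ (true, true) *ᵥ vv a b = SS ψ a b • w1 := by
    refine aux_aligned (F := fun a b => ϱ (true, true) *ᵥ vv a b)
      (L := fun a b => SS ψ a b)
      (fun a a' b => by simp only [vv_addl, mulVec_add])
      (fun c a b => by simp only [vv_smull, mulVec_smul])
      (fun a b b' => by simp only [vv_addr, mulVec_add])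
      (fun c a b => by simp only [vv_smulr, mulVec_smul])
      (fun a a' b => by simp only [SS_addl])
      (fun c a b => by simp only [SS_smull])
      (fun a b b' => by simp only [SS_addr])
      (fun c a b => by simp only [SS_smulr])
      (fun a b h => ?_)
      (Pi.single i0 1) (Pi.single k0 1) TB1 TB2 dt11 dt12 dt21 dt22
    have hc : SS (star ψ) (star a) (star b) = 0 := by
      rw [← SS_conj, show SS ψ a b = 0 from h, map_zero]
    have h2 := (hker (star a) (star b) hc).2.2.2
    rwa [star_star, star_star] at h2
  -- the mixed components are zero matrices
  have h01z : ϱ (false, true) = 0 := by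
    ext p q
    obtain ⟨k, l⟩ := q
    have h := hmix01 (Pi.single k 1) (Pi.single l 1)
    rw [vv_single, mulVec_single] at h
    have h2 := congrFun h p
    simpa using h2
  have h10z : ϱ (true, false) = 0 := by
    ext p q
    obtain ⟨k, l⟩ := q
    have h := hmix10 (Pi.single l 1) (Pi.single k 1)
    rw [vv_single, mulVec_single] at h
    have h2 := congrFun h p
    simpa using h2
  -- entries of the aligned components
  have h00ent : ∀ (p : α × β) (k : α) (l : β),
      ϱ (false, false) p (k, l) = star ψ (k, l) * w0 p := by
    intro p k l
    have h := hal00 (Pi.single k 1) (Pi.single l 1)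
    rw [vv_single, mulVec_single, SS_single] at h
    have h2 := congrFun h p
    simpa using h2
  have h11ent : ∀ (p : α × β) (k : α) (l : β),
      ϱ (true, true) p (k, l) = ψ (k, l) * w1 p := by
    intro p k l
    have h := hal11 (Pi.single k 1) (Pi.single l 1)
    rw [vv_single, mulVec_single, SS_single] at h
    have h2 := congrFun h p
    simpa using h2
  -- use hermiticity to identify the rank-one factors
  have hsqs : (starRingEnd ℂ) (ψ (q1, q2)) ≠ 0 := by
    rw [starRingEnd_apply]; exact star_ne_zero.mpr hqs
  set c0 : ℂ := (starRingEnd ℂ) (w0 (q1, q2)) / (starRingEnd ℂ) (ψ (q1, q2)) with hc0def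
  set c1 : ℂ := (starRingEnd ℂ) (w1 (q1, q2)) / ψ (q1, q2) with hc1def
  have hw0p : ∀ p, w0 p = c0 * ψ p := by
    intro p
    have e1 : ϱ (false, false) p (q1, q2) = star ψ (q1, q2) * w0 p := h00ent p q1 q2
    have e2 : ϱ (false, false) (q1, q2) p = star ψ p * w0 (q1, q2) := by
      obtain ⟨pa, pb⟩ := p; exact h00ent _ pa pb
    have e3 := (hpsd (false, false)).1.apply p (q1, q2)
    rw [e2, e1] at e3
    simp only [star_mul', Pi.star_apply, star_star] at e3
    simp only [← starRingEnd_apply] at e3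
    rw [hc0def]
    field_simp
    linear_combination -e3
  have hw1p : ∀ p, w1 p = c1 * (starRingEnd ℂ) (ψ p) := by
    intro p
    have e1 : ϱ (true, true) p (q1, q2) = ψ (q1, q2) * w1 p := h11ent p q1 q2
    have e2 : ϱ (true, true) (q1, q2) p = ψ p * w1 (q1, q2) := by
      obtain ⟨pa, pb⟩ := p; exact h11ent _ pa pb
    have e3 := (hpsd (true, true)).1.apply p (q1, q2)
    rw [e2, e1] at e3
    simp only [star_mul', Pi.star_apply, star_star] at e3
    simp only [← starRingEnd_apply] at e3
    rw [hc1def]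
    field_simp
    linear_combination -e3
  have hρ00 : ∀ p q, ϱ (false, false) p q = c0 * (ψ p * (starRingEnd ℂ) (ψ q)) := by
    intro p q
    obtain ⟨k, l⟩ := q
    rw [h00ent p k l, hw0p p]
    simp only [Pi.star_apply, starRingEnd_apply]
    ring
  have hρ11 : ∀ p q, ϱ (true, true) p q = c1 * (ψ q * (starRingEnd ℂ) (ψ p)) := by
    intro p q
    obtain ⟨k, l⟩ := q
    rw [h11ent p k l, hw1p p]
    simp only [Pi.star_apply, starRingEnd_apply]
    ring
  -- nonnegativity of the coefficients
  have hsum1 : ∑ q : α × β, star (ψ q) * ψ q = 1 := by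
    have h1 : ∀ q : α × β, star (ψ q) * ψ q = (Complex.normSq (ψ q) : ℂ) := fun q => by
      rw [RCLike.star_def, mul_comm, Complex.mul_conj]
    calc ∑ q : α × β, star (ψ q) * ψ q = ∑ q : α × β, (Complex.normSq (ψ q) : ℂ) :=
          Finset.sum_congr rfl fun q _ => h1 q
      _ = ((∑ q : α × β, Complex.normSq (ψ q) : ℝ) : ℂ) := by push_cast; rfl
      _ = 1 := by rw [hψnorm, Complex.ofReal_one]
  have hQc0 : star ψ ⬝ᵥ ϱ (false, false) *ᵥ ψ = c0 := by
    rw [Q_expand]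
    calc ∑ x : (α × β) × (α × β), (starRingEnd ℂ) (ψ x.1) * (ϱ (false, false) x.1 x.2 * ψ x.2)
        = ∑ x : (α × β) × (α × β), (star (ψ x.1) * ψ x.1) * (c0 * (star (ψ x.2) * ψ x.2)) := by
          refine Finset.sum_congr rfl fun x _ => ?_
          rw [hρ00 x.1 x.2]
          simp only [starRingEnd_apply]
          ring
      _ = (∑ p : α × β, star (ψ p) * ψ p) * (∑ q : α × β, c0 * (star (ψ q) * ψ q)) := by
          rw [Fintype.sum_mul_sum, Fintype.sum_prod_type]
      _ = c0 := by rw [hsum1, ← Finset.mul_sum, hsum1, one_mul, mul_one]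
  have hQc1 : star (star ψ) ⬝ᵥ ϱ (true, true) *ᵥ (star ψ) = c1 := by
    rw [Q_expand]
    calc ∑ x : (α × β) × (α × β),
          (starRingEnd ℂ) ((star ψ) x.1) * (ϱ (true, true) x.1 x.2 * (star ψ) x.2)
        = ∑ x : (α × β) × (α × β), (star (ψ x.1) * ψ x.1) * (c1 * (star (ψ x.2) * ψ x.2)) := by
          refine Finset.sum_congr rfl fun x _ => ?_
          rw [hρ11 x.1 x.2]
          simp only [starRingEnd_apply, Pi.star_apply, star_star]
          ring
      _ = (∑ p : α × β, star (ψ p) * ψ p) * (∑ q : α × β, c1 * (star (ψ q) * ψ q)) := by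
          rw [Fintype.sum_mul_sum, Fintype.sum_prod_type]
      _ = c1 := by rw [hsum1, ← Finset.mul_sum, hsum1, one_mul, mul_one]
  have hc0nn : 0 ≤ c0 := by rw [← hQc0]; exact (hpsd (false, false)).dotProduct_mulVec_nonneg ψ
  have hc1nn : 0 ≤ c1 := by rw [← hQc1]; exact (hpsd (true, true)).dotProduct_mulVec_nonneg (star ψ)
  -- the coefficients sum to one
  have hsum2 := hsum
  rw [h01z, h10z] at hsum2
  have hptB0 : ptB (0 : Matrix (α × β) (α × β) ℂ) = 0 := rfl
  have hptA0 : ptA (0 : Matrix (α × β) (α × β) ℂ) = 0 := rfl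
  rw [hptB0, hptA0, add_zero, add_zero] at hsum2
  have hent := congrFun (congrFun hsum2 (q1, q2)) (q1, q2)
  simp only [Matrix.add_apply, Matrix.transpose_apply] at hent
  rw [hΨ (q1, q2) (q1, q2), hρ00 (q1, q2) (q1, q2), hρ11 (q1, q2) (q1, q2)] at hent
  have hne2 : ψ (q1, q2) * (starRingEnd ℂ) (ψ (q1, q2)) ≠ 0 :=
    mul_ne_zero hqs hsqs
  have hcc : c0 + c1 = 1 := by
    have h9 : (c0 + c1 - 1) * (ψ (q1, q2) * (starRingEnd ℂ) (ψ (q1, q2))) = 0 := by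
      linear_combination -hent
    rcases mul_eq_zero.mp h9 with h | h
    · linear_combination h
    · exact absurd h hne2
  obtain ⟨hc0re, hc0im⟩ := Complex.nonneg_iff.mp hc0nn
  obtain ⟨hc1re, hc1im⟩ := Complex.nonneg_iff.mp hc1nn
  have hresum : c0.re + c1.re = 1 := by
    have h9 := congrArg Complex.re hcc
    simpa using h9
  have hc0eq : ((c0.re : ℝ) : ℂ) = c0 := Complex.ext (by simp) (by simp [← hc0im])
  have hc1eq : ((1 - c0.re : ℝ) : ℂ) = c1 := by
    refine Complex.ext ?_ ?_
    · simp only [Complex.ofReal_re]; linarith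
    · simp [← hc1im]
  refine ⟨h01z, h10z, c0.re, hc0re, by linarith, ?_, ?_⟩
  · ext x y
    rw [hρ00 x y, Matrix.smul_apply, hΨ x y, smul_eq_mul, hc0eq]
  · ext x y
    rw [hρ11 x y, Matrix.smul_apply, Matrix.transpose_apply, hΨ y x, smul_eq_mul, hc1eq]
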